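/- Let n ≥ 1 and let Δ ⊂ ℝ^n be the root system of osp(1|2n), namely Δ := {±δ_k ± δ_l : 1 ≤ k ≠ l ≤ n} ∪ {±2δ_k : 1 ≤ k ≤ n} ∪ {±δ_k : 1 ≤ k ≤ n}. Then there exists no cominuscule parabolic set of roots of Δ. -/
import Mathlib


open Pointwise

/-- A proper subset `P` of a symmetric root set `Δ` is a parabolic set of roots if
`Δ = P ∪ (-P)` and `P` is closed under sums lying in `Δ`. -/
def IsParabolic {V : Type*} [AddCommGroup V] (Δ P : Set V) : Prop :=
  P ⊂ Δ ∧ Δ = P ∪ (-P) ∧ ∀ α ∈ P, ∀ β ∈ P, α + β ∈ Δ → α + β ∈ P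

/-- A parabolic set of roots is cominuscule if the sum of any two elements of its
nilradical `N⁺ = P \ (-P)` is not a root. -/
def IsCominuscule {V : Type*} [AddCommGroup V] (Δ P : Set V) : Prop :=
  IsParabolic Δ P ∧ ∀ α ∈ P \ (-P), ∀ β ∈ P \ (-P), α + β ∉ Δ

namespace Osp1

variable (n : ℕ)

noncomputable def δ (k : Fin n) : Fin n → ℝ := Pi.single k 1

/-- The root system of `osp(1|2n)`. -/
noncomputable def Δroot : Set (Fin n → ℝ) :=
  {v | ∃ k l : Fin n, k ≠ l ∧
      (v = δ n k + δ n l ∨ v = δ n k - δ n l ∨ v = -δ n k + δ n l ∨ v = -δ n k - δ n l)} ∪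
  {v | ∃ k : Fin n, v = (2 : ℝ) • δ n k ∨ v = -((2 : ℝ) • δ n k)} ∪
  {v | ∃ k : Fin n, v = δ n k ∨ v = -δ n k}

end Osp1

theorem stmt_6 (n : ℕ) (hn : 1 ≤ n) :
    ¬ ∃ P : Set (Fin n → ℝ), IsCominuscule (Osp1.Δroot n) P := by
  rintro ⟨P, ⟨⟨hPsub, hΔ, hclosed⟩, hcom⟩⟩
  have hδΔ : ∀ k : Fin n, Osp1.δ n k ∈ Osp1.Δroot n := fun k =>
    Or.inr ⟨k, Or.inl rfl⟩
  have h2δΔ : ∀ k : Fin n, Osp1.δ n k + Osp1.δ n k ∈ Osp1.Δroot n := by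
    intro k
    exact Or.inl (Or.inr ⟨k, Or.inl (two_smul ℝ _).symm⟩)
  have hn2δΔ : ∀ k : Fin n, -Osp1.δ n k + -Osp1.δ n k ∈ Osp1.Δroot n := by
    intro k
    refine Or.inl (Or.inr ⟨k, Or.inr ?_⟩)
    rw [two_smul ℝ, neg_add]
  -- each ±δ_k lies in P
  have hkey : ∀ k : Fin n, Osp1.δ n k ∈ P ∧ -Osp1.δ n k ∈ P := by
    intro k
    have h1 : Osp1.δ n k ∈ P ∪ -P := hΔ ▸ hδΔ k
    rcases h1 with h1 | h1
    · refine ⟨h1, ?_⟩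
      by_contra hneg
      exact hcom _ ⟨h1, fun hm => hneg (Set.mem_neg.mp hm)⟩ _
        ⟨h1, fun hm => hneg (Set.mem_neg.mp hm)⟩ (h2δΔ k)
    · have h1' : -Osp1.δ n k ∈ P := Set.mem_neg.mp h1
      refine ⟨?_, h1'⟩
      by_contra hpos
      have hnot : -Osp1.δ n k ∉ -P := by
        intro hm
        exact hpos (by simpa using Set.mem_neg.mp hm)
      exact hcom _ ⟨h1', hnot⟩ _ ⟨h1', hnot⟩ (hn2δΔ k)
  -- hence Δ ⊆ P
  have hΔP : Osp1.Δroot n ⊆ P := by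
    rintro v (hv | hv) 
    · rcases hv with hv | hv
      · obtain ⟨k, l, hkl, hv⟩ := hv
        rcases hv with rfl | rfl | rfl | rfl
        · exact hclosed _ (hkey k).1 _ (hkey l).1 (Or.inl (Or.inl ⟨k, l, hkl, Or.inl rfl⟩))
        · rw [sub_eq_add_neg]
          exact hclosed _ (hkey k).1 _ (hkey l).2
            (Or.inl (Or.inl ⟨k, l, hkl, Or.inr (Or.inl (sub_eq_add_neg _ _))⟩))
        · exact hclosed _ (hkey k).2 _ (hkey l).1
            (Or.inl (Or.inl ⟨k, l, hkl, Or.inr (Or.inr (Or.inl rfl))⟩))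
        · rw [show -Osp1.δ n k - Osp1.δ n l = -Osp1.δ n k + -Osp1.δ n l by abel]
          exact hclosed _ (hkey k).2 _ (hkey l).2
            (Or.inl (Or.inl ⟨k, l, hkl, Or.inr (Or.inr (Or.inr (by abel)))⟩))
      · obtain ⟨k, hv⟩ := hv
        rcases hv with rfl | rfl
        · rw [two_smul ℝ]
          exact hclosed _ (hkey k).1 _ (hkey k).1 (h2δΔ k)
        · rw [show -((2:ℝ) • Osp1.δ n k) = -Osp1.δ n k + -Osp1.δ n k by
            rw [two_smul ℝ, neg_add]]
          exact hclosed _ (hkey k).2 _ (hkey k).2 (hn2δΔ k)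
    · obtain ⟨k, hv⟩ := hv
      rcases hv with rfl | rfl
      · exact (hkey k).1
      · exact (hkey k).2
  exact hPsub.2 hΔP
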